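/- Let 𝒢 = {G_1,…,G_K} be a partition of {1,…,n} with minimum cluster size m and characteristic matrix B*. For any symmetric matrix W ∈ ℝ^{n×n} and every B ∈ C: |⟨W, B* − B⟩| ≤ 6·|B*W|_∞ · Σ_{1 ≤ k ≠ l ≤ K} |B_{G_k G_l}|_1 + |W|_op · ( (1/m)·Σ_{1 ≤ k ≠ l ≤ K} |B_{G_k G_l}|_1 + (tr(B) − K) ). -/

import Mathlib

open MeasureTheory ProbabilityTheory Matrix Real

noncomputable section

namespace Clustering

/-- Euclidean norm of a (finitely indexed) real vector. -/
def vnorm {ι : Type*} [Fintype ι] (v : ι → ℝ) : ℝ := Real.sqrt (∑ i, v i ^ 2)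

/-- Euclidean inner product. -/
def vdot {ι : Type*} [Fintype ι] (u v : ι → ℝ) : ℝ := ∑ i, u i * v i

/-- Frobenius norm of a matrix. -/
def frobNorm {ι κ : Type*} [Fintype ι] [Fintype κ] (M : Matrix ι κ ℝ) : ℝ :=
  Real.sqrt (∑ i, ∑ j, M i j ^ 2)

/-- Operator (`ℓ₂ → ℓ₂` spectral) norm of a matrix. -/
def opNorm {ι κ : Type*} [Fintype ι] [Fintype κ] (M : Matrix ι κ ℝ) : ℝ :=
  sSup {r | ∃ x : κ → ℝ, vnorm x ≤ 1 ∧ r = vnorm (M.mulVec x)}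

/-- Nuclear norm: the sum of the singular values, i.e. of the square roots of the
eigenvalues of `Mᴴ * M`. -/
def nuclearNorm {ι : Type*} [Fintype ι] [DecidableEq ι] (M : Matrix ι ι ℝ) : ℝ :=
  ∑ i, Real.sqrt ((Matrix.isHermitian_conjTranspose_mul_self M).eigenvalues i)

/-- Entrywise supremum norm. -/
def infNorm {ι κ : Type*} [Fintype ι] [Fintype κ] (M : Matrix ι κ ℝ) : ℝ :=
  ⨆ i, ⨆ j, |M i j|

/-- Variation semi-norm of (the diagonal of) a matrix: the difference between the largest
and the smallest diagonal entry. -/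
def varSeminorm {ι : Type*} [Fintype ι] (M : Matrix ι ι ℝ) : ℝ :=
  (⨆ i, M i i) - ⨅ i, M i i

/-- Frobenius (entrywise) inner product of two square matrices. -/
def mip {ι : Type*} [Fintype ι] (A B : Matrix ι ι ℝ) : ℝ := ∑ a, ∑ b, A a b * B a b

/-- `G` is a partition of `{1,…,n}` into `K` (nonempty) groups. -/
def IsPartition {n K : ℕ} (G : Fin K → Finset (Fin n)) : Prop :=
  (∀ a : Fin n, ∃! k, a ∈ G k) ∧ ∀ k, (G k).Nonempty

/-- Characteristic matrix `B*` of a partition. -/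
def charMatrix {n K : ℕ} (G : Fin K → Finset (Fin n)) : Matrix (Fin n) (Fin n) ℝ :=
  fun a b => ∑ k, if a ∈ G k ∧ b ∈ G k then ((G k).card : ℝ)⁻¹ else 0

/-- Minimal cluster size `m`. -/
def minCard {n K : ℕ} (G : Fin K → Finset (Fin n)) : ℕ := sInf {m | ∃ k, m = (G k).card}

/-- `|B_{G_k G_l}|₁`, the entrywise `ℓ¹`-norm of block `(k,l)` of `B`. -/
def blockL1 {n K : ℕ} (G : Fin K → Finset (Fin n)) (k l : Fin K)
    (B : Matrix (Fin n) (Fin n) ℝ) : ℝ :=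
  ∑ a ∈ G k, ∑ b ∈ G l, |B a b|

/-- `∑_{1 ≤ k ≠ l ≤ K} |B_{G_k G_l}|₁`. -/
def offDiagSum {n K : ℕ} (G : Fin K → Finset (Fin n)) (B : Matrix (Fin n) (Fin n) ℝ) : ℝ :=
  ∑ k, ∑ l, if k = l then 0 else blockL1 G k l B

/-- The (population) means `ν` are `(𝒢, μ, δ)`-clustered. -/
def IsClustered {n p K : ℕ} (ν : Fin n → Fin p → ℝ) (G : Fin K → Finset (Fin n))
    (μcl : Fin K → Fin p → ℝ) (δ : ℝ) : Prop :=
  IsPartition G ∧ 0 ≤ δ ∧ ∀ k, ∀ a ∈ G k, vnorm (fun i => ν a i - μcl k i) ≤ δ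

/-- Separation `Δ(μ) = min_{k ≠ l} |μ_k - μ_l|₂` between the cluster means. -/
def Delta {p K : ℕ} (μcl : Fin K → Fin p → ℝ) : ℝ :=
  sInf {r | ∃ k l : Fin K, k ≠ l ∧ r = vnorm (fun i => μcl k i - μcl l i)}

variable {Ω : Type*} [MeasurableSpace Ω]

/-- Mean (expectation) of a random vector, componentwise. -/
def mean {ι : Type*} [Fintype ι] (P : Measure Ω) (X : Ω → ι → ℝ) : ι → ℝ :=
  fun i => ∫ ω, X ω i ∂P

/-- `Y ~ subg(S)`: `Y` is subgaussian with variance-bounding matrix `S`. -/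
def IsSubg {ι : Type*} [Fintype ι] (P : Measure Ω) (Y : Ω → ι → ℝ)
    (S : Matrix ι ι ℝ) : Prop :=
  ∀ x : ι → ℝ,
    ∫ ω, Real.exp (vdot x fun i => Y ω i - mean P Y i) ∂P ≤
      Real.exp (vdot x (S.mulVec x) / 2)

/-- Observed Gram matrix `Λ̂`. -/
def gramHat {n p : ℕ} (X : Fin n → Ω → Fin p → ℝ) (ω : Ω) : Matrix (Fin n) (Fin n) ℝ :=
  fun a b => vdot (X a ω) (X b ω)

/-- Noise `E_a = X_a - ν_a`. -/
def noiseE {n p : ℕ} (P : Measure Ω) (X : Fin n → Ω → Fin p → ℝ) (a : Fin n) (ω : Ω) :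
    Fin p → ℝ := fun i => X a ω i - mean P (X a) i

/-- `Γ = Diag(E[|X_a − ν_a|₂²])ₐ`. -/
def gammaMat {n p : ℕ} (P : Measure Ω) (X : Fin n → Ω → Fin p → ℝ) :
    Matrix (Fin n) (Fin n) ℝ :=
  Matrix.diagonal fun a => ∫ ω, vnorm (noiseE P X a ω) ^ 2 ∂P

/-- `(W₄)_{ab} = ⟨E_a, E_b⟩ − Γ_{ab}`. -/
def W4mat {n p : ℕ} (P : Measure Ω) (X : Fin n → Ω → Fin p → ℝ) (ω : Ω) :
    Matrix (Fin n) (Fin n) ℝ :=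
  fun a b => vdot (noiseE P X a ω) (noiseE P X b ω) - gammaMat P X a b

/-- `σ² := maxₐ |Σ_a|_op`. -/
def sigma2 {n p : ℕ} (Sg : Fin n → Matrix (Fin p) (Fin p) ℝ) : ℝ := ⨆ a, opNorm (Sg a)

/-- `𝒱² := maxₐ |Σ_a|_F`. -/
def Vfrob2 {n p : ℕ} (Sg : Fin n → Matrix (Fin p) (Fin p) ℝ) : ℝ := ⨆ a, frobNorm (Sg a)

/-- `γ² := maxₐ |Σ_a|_*`. -/
def gamma2 {n p : ℕ} (Sg : Fin n → Matrix (Fin p) (Fin p) ℝ) : ℝ := ⨆ a, nuclearNorm (Sg a)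

/-- `σ_k² := max_{a ∈ G_k} |Σ_a|_op`. -/
def sigma2On {n p K : ℕ} (Sg : Fin n → Matrix (Fin p) (Fin p) ℝ)
    (G : Fin K → Finset (Fin n)) (k : Fin K) : ℝ :=
  ⨆ a : {a // a ∈ G k}, opNorm (Sg a.1)

/-- `V(a,b) = max_{(c,d) ∈ ([n]∖{a,b})²} |⟨X_a − X_b, (X_c − X_d)/|X_c − X_d|₂⟩|`. -/
def Vstat {n p : ℕ} (X : Fin n → Ω → Fin p → ℝ) (ω : Ω) (a b : Fin n) : ℝ :=
  ⨆ c : Fin n, ⨆ d : Fin n,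
    if c ≠ a ∧ c ≠ b ∧ d ≠ a ∧ d ≠ b then
      |vdot (fun i => X a ω i - X b ω i)
          (fun i => (X c ω i - X d ω i) / vnorm (fun j => X c ω j - X d ω j))|
    else 0

/-- A minimizer of `f` over the finite set `s`. -/
def argminOn {n : ℕ} [NeZero n] (s : Finset (Fin n)) (f : Fin n → ℝ) : Fin n :=
  if h : s.Nonempty then (Finset.exists_min_image s f h).choose else 0

/-- `b₁ = argmin_{b ≠ a} V(a,b)`. -/
def bOne {n p : ℕ} [NeZero n] (X : Fin n → Ω → Fin p → ℝ) (ω : Ω) (a : Fin n) : Fin n :=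
  argminOn (Finset.univ.erase a) fun b => Vstat X ω a b

/-- `b₂ = argmin_{b ∉ {a, b₁}} V(a,b)`. -/
def bTwo {n p : ℕ} [NeZero n] (X : Fin n → Ω → Fin p → ℝ) (ω : Ω) (a : Fin n) : Fin n :=
  argminOn ((Finset.univ.erase a).erase (bOne X ω a)) fun b => Vstat X ω a b

/-- The corrected estimator `Γ̂^corr = Diag(⟨X_a − X_{b₁}, X_a − X_{b₂}⟩)ₐ`. -/
def gammaCorr {n p : ℕ} [NeZero n] (X : Fin n → Ω → Fin p → ℝ) (ω : Ω) :
    Matrix (Fin n) (Fin n) ℝ :=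
  Matrix.diagonal fun a =>
    vdot (fun i => X a ω i - X (bOne X ω a) ω i) fun i => X a ω i - X (bTwo X ω a) ω i

/-- `C_K^{0,1}`. -/
def CK01 (n K : ℕ) : Set (Matrix (Fin n) (Fin n) ℝ) :=
  {B | (∀ a b, 0 ≤ B a b) ∧ B.IsSymm ∧ B.trace = (K : ℝ) ∧
    (B.mulVec fun _ => 1) = (fun _ => 1) ∧ B * B = B}

/-- `C_K`. -/
def CKset (n K : ℕ) : Set (Matrix (Fin n) (Fin n) ℝ) :=
  {B | (∀ a b, 0 ≤ B a b) ∧ B.IsSymm ∧ B.trace = (K : ℝ) ∧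
    (B.mulVec fun _ => 1) = (fun _ => 1) ∧ B.PosSemidef}

/-- `C = ⋃_K C_K`. -/
def Cset (n : ℕ) : Set (Matrix (Fin n) (Fin n) ℝ) := ⋃ K : ℕ, CKset n K

/-- `B₀` is the unique maximizer of `B ↦ ⟨M, B⟩` over `S`. -/
def UniqueMaxOn {n : ℕ} (M : Matrix (Fin n) (Fin n) ℝ)
    (S : Set (Matrix (Fin n) (Fin n) ℝ)) (B0 : Matrix (Fin n) (Fin n) ℝ) : Prop :=
  B0 ∈ S ∧ ∀ B ∈ S, B ≠ B0 → mip M B < mip M B0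

/-- `B₀` is the unique maximizer of the `κ`-penalized objective `B ↦ ⟨M, B⟩ − κ·tr B` over `S`. -/
def UniqueMaxPen {n : ℕ} (M : Matrix (Fin n) (Fin n) ℝ) (κ : ℝ)
    (S : Set (Matrix (Fin n) (Fin n) ℝ)) (B0 : Matrix (Fin n) (Fin n) ℝ) : Prop :=
  B0 ∈ S ∧ ∀ B ∈ S, B ≠ B0 → mip M B - κ * B.trace < mip M B0 - κ * B0.trace


/-- Population Gram matrix `Λ = (⟨ν_a, ν_b⟩)_{a,b}`. -/
def gramMean {n p : ℕ} (P : Measure Ω) (X : Fin n → Ω → Fin p → ℝ) :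
    Matrix (Fin n) (Fin n) ℝ :=
  fun a b => vdot (mean P (X a)) (mean P (X b))

/-! ### Auxiliary lemmas for Lemma B.3 -/

section Aux

variable {ι κ : Type*} [Fintype ι] [Fintype κ]

lemma vnorm_nonneg (v : ι → ℝ) : 0 ≤ vnorm v := Real.sqrt_nonneg _

lemma vnorm_sq (v : ι → ℝ) : vnorm v ^ 2 = ∑ i, v i ^ 2 :=
  Real.sq_sqrt (Finset.sum_nonneg fun _ _ => sq_nonneg _)

lemma vnorm_eq_zero {v : ι → ℝ} (h : vnorm v = 0) : v = 0 := by
  have h2 : ∑ i, v i ^ 2 = 0 := by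
    have := vnorm_sq v; rw [h] at this; simpa using this.symm
  funext i
  have := (Finset.sum_eq_zero_iff_of_nonneg (fun i _ => sq_nonneg (v i))).1 h2 i (Finset.mem_univ i)
  exact pow_eq_zero_iff (n := 2) (by norm_num) |>.1 this

lemma vnorm_smul (c : ℝ) (v : ι → ℝ) : vnorm (fun i => c * v i) = |c| * vnorm v := by
  unfold vnorm
  rw [← Real.sqrt_sq_eq_abs, ← Real.sqrt_mul (sq_nonneg c)]
  congr 1
  rw [Finset.mul_sum]
  exact Finset.sum_congr rfl fun i _ => by ring

lemma abs_vdot_le (u v : ι → ℝ) : |vdot u v| ≤ vnorm u * vnorm v := by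
  have h := Finset.sum_mul_sq_le_sq_mul_sq Finset.univ u v
  calc |vdot u v| = Real.sqrt ((vdot u v) ^ 2) := (Real.sqrt_sq_eq_abs _).symm
    _ ≤ Real.sqrt ((∑ i, u i ^ 2) * ∑ i, v i ^ 2) := Real.sqrt_le_sqrt h
    _ = vnorm u * vnorm v := Real.sqrt_mul (Finset.sum_nonneg fun _ _ => sq_nonneg _) _

lemma mem_opSet_zero (M : Matrix ι κ ℝ) :
    (0 : ℝ) ∈ {r | ∃ x : κ → ℝ, vnorm x ≤ 1 ∧ r = vnorm (M.mulVec x)} := by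
  refine ⟨0, ?_, ?_⟩
  · simp [vnorm]
  · simp [vnorm, Matrix.mulVec_zero]

lemma bddAbove_opSet (M : Matrix ι κ ℝ) :
    BddAbove {r | ∃ x : κ → ℝ, vnorm x ≤ 1 ∧ r = vnorm (M.mulVec x)} := by
  refine ⟨Real.sqrt (∑ i, ∑ j, M i j ^ 2), fun r hr => ?_⟩
  obtain ⟨x, hx, rfl⟩ := hr
  have hx2 : ∑ j, x j ^ 2 ≤ 1 := by
    rw [← vnorm_sq]
    calc vnorm x ^ 2 ≤ 1 ^ 2 := pow_le_pow_left₀ (vnorm_nonneg x) hx 2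
      _ = 1 := one_pow 2
  unfold vnorm
  apply Real.sqrt_le_sqrt
  apply Finset.sum_le_sum
  intro i _
  calc (M.mulVec x i) ^ 2 = (∑ j, M i j * x j) ^ 2 := by rfl
    _ ≤ (∑ j, M i j ^ 2) * ∑ j, x j ^ 2 := Finset.sum_mul_sq_le_sq_mul_sq _ _ _
    _ ≤ (∑ j, M i j ^ 2) * 1 :=
        mul_le_mul_of_nonneg_left hx2 (Finset.sum_nonneg fun _ _ => sq_nonneg _)
    _ = ∑ j, M i j ^ 2 := mul_one _

lemma opNorm_nonneg (M : Matrix ι κ ℝ) : 0 ≤ opNorm M :=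
  le_csSup (bddAbove_opSet M) (mem_opSet_zero M)

lemma vnorm_mulVec_le (M : Matrix ι κ ℝ) (x : κ → ℝ) :
    vnorm (M.mulVec x) ≤ opNorm M * vnorm x := by
  rcases eq_or_ne (vnorm x) 0 with h0 | h0
  · have : x = 0 := vnorm_eq_zero h0
    subst this
    rw [h0, mul_zero, Matrix.mulVec_zero]
    have : vnorm (0 : ι → ℝ) = 0 := by unfold vnorm; simp
    rw [this]
  · have hpos : 0 < vnorm x := lt_of_le_of_ne (vnorm_nonneg x) (Ne.symm h0)
    set c := (vnorm x)⁻¹ with hc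
    have hcpos : 0 < c := inv_pos.2 hpos
    have hu : vnorm (fun i => c * x i) = 1 := by
      rw [vnorm_smul, abs_of_pos hcpos, hc, inv_mul_cancel₀ h0]
    have hmem : vnorm (M.mulVec (fun i => c * x i)) ≤ opNorm M := by
      apply le_csSup (bddAbove_opSet M)
      exact ⟨_, le_of_eq hu, rfl⟩
    have hVX : M.mulVec (fun i => c * x i) = fun i => c * (M.mulVec x i) := by
      have : (fun i => c * x i) = c • x := rfl
      rw [this, Matrix.mulVec_smul]
      rfl
    rw [hVX, vnorm_smul, abs_of_pos hcpos] at hmem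
    calc vnorm (M.mulVec x) = vnorm x * (c * vnorm (M.mulVec x)) := by
          rw [hc, mul_inv_cancel_left₀ h0]
      _ ≤ vnorm x * opNorm M := mul_le_mul_of_nonneg_left hmem (le_of_lt hpos)
      _ = opNorm M * vnorm x := mul_comm _ _

lemma abs_quad_le (W : Matrix ι ι ℝ) (x : ι → ℝ) :
    |vdot x (W.mulVec x)| ≤ opNorm W * ∑ i, x i ^ 2 := by
  calc |vdot x (W.mulVec x)| ≤ vnorm x * vnorm (W.mulVec x) := abs_vdot_le _ _
    _ ≤ vnorm x * (opNorm W * vnorm x) :=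
        mul_le_mul_of_nonneg_left (vnorm_mulVec_le W x) (vnorm_nonneg x)
    _ = opNorm W * vnorm x ^ 2 := by ring
    _ = opNorm W * ∑ i, x i ^ 2 := by rw [vnorm_sq]

lemma abs_mip_le_opNorm_trace [DecidableEq ι] (W S : Matrix ι ι ℝ) (hS : S.PosSemidef) :
    |mip W S| ≤ opNorm W * S.trace := by
  open scoped MatrixOrder in
  obtain ⟨C, hC⟩ := CStarAlgebra.nonneg_iff_eq_star_mul_self.mp hS.nonneg
  obtain rfl : S = Cᴴ * C := hC
  have hentry : ∀ a b, (Cᴴ * C) a b = ∑ i, C i a * C i b := by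
    intro a b
    simp [Matrix.mul_apply, Matrix.conjTranspose_apply]
  have hmip : mip W (Cᴴ * C) = ∑ i, vdot (fun a => C i a) (W.mulVec (fun a => C i a)) := by
    unfold mip vdot Matrix.mulVec
    simp only [hentry]
    have key : ∀ a, (∑ b, W a b * ∑ i, C i a * C i b)
        = ∑ i, ∑ b, C i a * (W a b * C i b) := by
      intro a
      simp only [Finset.mul_sum]
      rw [Finset.sum_comm]
      exact Finset.sum_congr rfl fun i _ => Finset.sum_congr rfl fun b _ => by ring
    simp only [key]
    rw [Finset.sum_comm]
    simp only [dotProduct, Finset.mul_sum]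
  have htr : (Cᴴ * C).trace = ∑ i, ∑ a, C i a ^ 2 := by
    unfold Matrix.trace
    simp only [Matrix.diag_apply, hentry]
    rw [Finset.sum_comm]
    congr 1; funext i; congr 1; funext a; ring
  rw [hmip, htr]
  calc |∑ i, vdot (fun a => C i a) (W.mulVec (fun a => C i a))|
      ≤ ∑ i, |vdot (fun a => C i a) (W.mulVec (fun a => C i a))| := Finset.abs_sum_le_sum_abs _ _
    _ ≤ ∑ i, opNorm W * ∑ a, C i a ^ 2 := Finset.sum_le_sum fun i _ => abs_quad_le _ _
    _ = opNorm W * ∑ i, ∑ a, C i a ^ 2 := by rw [Finset.mul_sum]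

lemma entry_le_infNorm [Nonempty ι] [Nonempty κ] (M : Matrix ι κ ℝ) (a : ι) (b : κ) :
    |M a b| ≤ infNorm M := by
  unfold infNorm
  have h1 : |M a b| ≤ ⨆ j, |M a j| :=
    le_ciSup (f := fun j => |M a j|) (Set.Finite.bddAbove (Set.finite_range _)) b
  exact h1.trans
    (le_ciSup (f := fun i => ⨆ j, |M i j|) (Set.Finite.bddAbove (Set.finite_range _)) a)

lemma mip_eq_trace [DecidableEq ι] (A B : Matrix ι ι ℝ) :
    mip A B = (A * Bᵀ).trace := by
  unfold mip Matrix.trace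
  simp [Matrix.diag_apply, Matrix.mul_apply, Matrix.transpose_apply]

variable [DecidableEq ι]

lemma mip_add_left (A C D : Matrix ι ι ℝ) : mip (A + C) D = mip A D + mip C D := by
  simp [mip_eq_trace, Matrix.add_mul, Matrix.trace_add]

lemma mip_sub_right (A X Y : Matrix ι ι ℝ) : mip A (X - Y) = mip A X - mip A Y := by
  simp [mip_eq_trace, Matrix.transpose_sub, Matrix.mul_sub, Matrix.trace_sub]

lemma mip_neg_right (A X : Matrix ι ι ℝ) : mip A (-X) = - mip A X := by
  simp [mip_eq_trace, Matrix.transpose_neg, Matrix.mul_neg, Matrix.trace_neg]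

lemma mip_transpose_left (A D : Matrix ι ι ℝ) (hD : Dᵀ = D) : mip Aᵀ D = mip A D := by
  calc mip Aᵀ D = (Aᵀ * Dᵀ).trace := mip_eq_trace _ _
    _ = ((Aᵀ * Dᵀ)ᵀ).trace := (Matrix.trace_transpose _).symm
    _ = (D * A).trace := by
        rw [Matrix.transpose_mul, Matrix.transpose_transpose, Matrix.transpose_transpose]
    _ = (A * D).trace := Matrix.trace_mul_comm _ _
    _ = (A * Dᵀ).trace := by rw [hD]
    _ = mip A D := (mip_eq_trace _ _).symm

lemma mipL (A M D : Matrix ι ι ℝ) : mip (A * M) D = mip M (Aᵀ * D) := by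
  calc mip (A * M) D = (A * M * Dᵀ).trace := mip_eq_trace _ _
    _ = (Dᵀ * A * M).trace := Matrix.trace_mul_cycle A M Dᵀ
    _ = (M * (Dᵀ * A)).trace := Matrix.trace_mul_comm _ _
    _ = (M * (Aᵀ * D)ᵀ).trace := by
        rw [Matrix.transpose_mul, Matrix.transpose_transpose]
    _ = mip M (Aᵀ * D) := (mip_eq_trace _ _).symm

lemma mipR (M A D : Matrix ι ι ℝ) : mip (M * A) D = mip M (D * Aᵀ) := by
  calc mip (M * A) D = (M * A * Dᵀ).trace := mip_eq_trace _ _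
    _ = (M * (A * Dᵀ)).trace := by rw [Matrix.mul_assoc]
    _ = (M * (D * Aᵀ)ᵀ).trace := by
        rw [Matrix.transpose_mul, Matrix.transpose_transpose]
    _ = mip M (D * Aᵀ) := (mip_eq_trace _ _).symm

end Aux

section PartitionAux

variable {n K : ℕ} {G : Fin K → Finset (Fin n)}

/-- the cluster of `a` -/
def cluster (hG : IsPartition G) (a : Fin n) : Fin K := (hG.1 a).choose

lemma mem_cluster (hG : IsPartition G) (a : Fin n) : a ∈ G (cluster hG a) :=
  (hG.1 a).choose_spec.1

lemma cluster_eq (hG : IsPartition G) {a : Fin n} {k : Fin K} (h : a ∈ G k) :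
    k = cluster hG a := (hG.1 a).choose_spec.2 k h

lemma charMatrix_apply (hG : IsPartition G) {a : Fin n} {k : Fin K} (ha : a ∈ G k)
    (b : Fin n) :
    charMatrix G a b = if b ∈ G k then ((G k).card : ℝ)⁻¹ else 0 := by
  unfold charMatrix
  rw [Finset.sum_eq_single k]
  · simp [ha]
  · intro j _ hj
    rw [if_neg]
    rintro ⟨haj, -⟩
    exact hj ((cluster_eq hG haj).trans (cluster_eq hG ha).symm)
  · simp

lemma charMatrix_symm_apply (a b : Fin n) :
    charMatrix G a b = charMatrix G b a := by
  unfold charMatrix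
  exact Finset.sum_congr rfl fun k _ => if_congr and_comm rfl rfl

lemma charMatrix_off (hG : IsPartition G) {a b : Fin n} {k l : Fin K}
    (ha : a ∈ G k) (hb : b ∈ G l) (hkl : k ≠ l) : charMatrix G a b = 0 := by
  rw [charMatrix_apply hG ha, if_neg]
  intro hbk
  exact hkl ((cluster_eq hG hbk).trans (cluster_eq hG hb).symm)

lemma sum_partition (hG : IsPartition G) (f : Fin n → ℝ) :
    ∑ a, f a = ∑ k, ∑ a ∈ G k, f a := by
  have h1 : ∀ a : Fin n, (∑ k, if a ∈ G k then f a else 0) = f a := by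
    intro a
    rw [Finset.sum_eq_single (cluster hG a)]
    · simp [mem_cluster hG a]
    · intro j _ hj
      exact if_neg fun hmem => hj (cluster_eq hG hmem)
    · simp
  calc ∑ a, f a = ∑ a, ∑ k, if a ∈ G k then f a else 0 :=
        (Finset.sum_congr rfl fun a _ => (h1 a).symm)
    _ = ∑ k, ∑ a, (if a ∈ G k then f a else 0) := Finset.sum_comm
    _ = ∑ k, ∑ a ∈ G k, f a := by
        refine Finset.sum_congr rfl fun k _ => ?_
        rw [Finset.sum_ite_mem, Finset.univ_inter]

lemma card_inv_sum (k : Fin K) (hne : (G k).Nonempty) :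
    ∑ _a ∈ G k, ((G k).card : ℝ)⁻¹ = 1 := by
  rw [Finset.sum_const, nsmul_eq_mul, mul_inv_cancel₀]
  exact Nat.cast_ne_zero.2 (Finset.card_ne_zero.2 hne)

lemma charMatrix_rowsum (hG : IsPartition G) (a : Fin n) :
    ∑ b, charMatrix G a b = 1 := by
  have ha := mem_cluster hG a
  calc ∑ b, charMatrix G a b
      = ∑ b, if b ∈ G (cluster hG a) then ((G (cluster hG a)).card : ℝ)⁻¹ else 0 :=
        Finset.sum_congr rfl fun b _ => charMatrix_apply hG ha b
    _ = ∑ _b ∈ G (cluster hG a), ((G (cluster hG a)).card : ℝ)⁻¹ := by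
        rw [Finset.sum_ite_mem, Finset.univ_inter]
    _ = 1 := card_inv_sum _ (hG.2 _)

lemma charMatrix_colsum_over (hG : IsPartition G) {b : Fin n} {k : Fin K} (hb : b ∈ G k) :
    ∑ a ∈ G k, charMatrix G a b = 1 := by
  calc ∑ a ∈ G k, charMatrix G a b = ∑ _a ∈ G k, ((G k).card : ℝ)⁻¹ :=
        Finset.sum_congr rfl fun a ha => by rw [charMatrix_apply hG ha, if_pos hb]
    _ = 1 := card_inv_sum _ (hG.2 _)

lemma charMatrix_idem (hG : IsPartition G) :
    charMatrix G * charMatrix G = charMatrix G := by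
  ext a b
  rw [Matrix.mul_apply]
  have ha := mem_cluster hG a
  set k := cluster hG a with hk
  calc ∑ c, charMatrix G a c * charMatrix G c b
      = ∑ c, (if c ∈ G k then ((G k).card : ℝ)⁻¹ else 0) * charMatrix G c b :=
        Finset.sum_congr rfl fun c _ => by rw [charMatrix_apply hG ha]
    _ = ∑ c, (if c ∈ G k then ((G k).card : ℝ)⁻¹ * charMatrix G c b else 0) :=
        Finset.sum_congr rfl fun c _ => by split <;> simp
    _ = ∑ c ∈ G k, ((G k).card : ℝ)⁻¹ * charMatrix G c b := by
        rw [Finset.sum_ite_mem, Finset.univ_inter]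
    _ = ((G k).card : ℝ)⁻¹ * ∑ c ∈ G k, charMatrix G c b := by rw [Finset.mul_sum]
    _ = charMatrix G a b := by
        by_cases hb : b ∈ G k
        · rw [charMatrix_colsum_over hG hb, mul_one, charMatrix_apply hG ha, if_pos hb]
        · rw [charMatrix_apply hG ha, if_neg hb]
          have : ∀ c ∈ G k, charMatrix G c b = 0 := fun c hc => by
            rw [charMatrix_apply hG hc, if_neg hb]
          rw [Finset.sum_congr rfl this, Finset.sum_const, smul_zero, mul_zero]

lemma charMatrix_trace (hG : IsPartition G) :
    (charMatrix G).trace = (K : ℝ) := by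
  unfold Matrix.trace
  calc ∑ a, (charMatrix G).diag a = ∑ k, ∑ a ∈ G k, charMatrix G a a :=
        sum_partition hG _
    _ = ∑ k : Fin K, (1 : ℝ) := by
        refine Finset.sum_congr rfl fun k _ => ?_
        calc ∑ a ∈ G k, charMatrix G a a = ∑ _a ∈ G k, ((G k).card : ℝ)⁻¹ :=
              Finset.sum_congr rfl fun a ha => by rw [charMatrix_apply hG ha, if_pos ha]
          _ = 1 := card_inv_sum _ (hG.2 _)
    _ = (K : ℝ) := by simp

lemma charMatrix_transpose (hG : IsPartition G) : (charMatrix G)ᵀ = charMatrix G := by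
  ext a b
  exact (charMatrix_symm_apply b a)

lemma mip_charMatrix_self (hG : IsPartition G) :
    mip (charMatrix G) (charMatrix G) = (K : ℝ) := by
  rw [mip_eq_trace, charMatrix_transpose hG, charMatrix_idem hG, charMatrix_trace hG]

variable {B : Matrix (Fin n) (Fin n) ℝ}

lemma B_colsum (hBs : Matrix.IsSymm B) (hBrow : ∀ a, ∑ b, B a b = 1) (b : Fin n) :
    ∑ a, B a b = 1 := by
  rw [show (∑ a, B a b) = ∑ a, B b a from
    Finset.sum_congr rfl fun a _ => (hBs.apply a b).symm ▸ rfl]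
  exact hBrow b

lemma colsumD (hG : IsPartition G) (hBs : Matrix.IsSymm B) (hBrow : ∀ a, ∑ b, B a b = 1)
    {b : Fin n} {k : Fin K} (hb : b ∈ G k) :
    ∑ a ∈ G k, (charMatrix G a b - B a b) = ∑ a ∈ Finset.univ \ G k, B a b := by
  rw [Finset.sum_sub_distrib, charMatrix_colsum_over hG hb,
    Finset.sum_sdiff_eq_sub (Finset.subset_univ _), B_colsum hBs hBrow]

lemma offDiag_eq (hG : IsPartition G) (hB0 : ∀ a b, 0 ≤ B a b) :
    ∑ k, ∑ b ∈ G k, ∑ a ∈ Finset.univ \ G k, B a b = offDiagSum G B := by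
  have step : ∀ (k : Fin K) (b : Fin n),
      ∑ a ∈ Finset.univ \ G k, B a b = ∑ l, if l = k then 0 else ∑ a ∈ G l, B a b := by
    intro k b
    have h2 : ∑ l, (if l = k then (∑ a ∈ G l, B a b) else 0) = ∑ a ∈ G k, B a b := by
      rw [Finset.sum_ite_eq' Finset.univ k]; simp
    have h4 : ∑ l, (if l = k then 0 else ∑ a ∈ G l, B a b)
        = (∑ l, ∑ a ∈ G l, B a b) - ∑ l, (if l = k then (∑ a ∈ G l, B a b) else 0) := by
      rw [← Finset.sum_sub_distrib]
      exact Finset.sum_congr rfl fun l _ => by split <;> ring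
    rw [Finset.sum_sdiff_eq_sub (Finset.subset_univ _), h4, h2, ← sum_partition hG]
  calc ∑ k, ∑ b ∈ G k, ∑ a ∈ Finset.univ \ G k, B a b
      = ∑ k, ∑ b ∈ G k, ∑ l, (if l = k then 0 else ∑ a ∈ G l, B a b) :=
        Finset.sum_congr rfl fun k _ => Finset.sum_congr rfl fun b _ => step k b
    _ = ∑ k, ∑ l, (if l = k then 0 else ∑ b ∈ G k, ∑ a ∈ G l, B a b) := by
        refine Finset.sum_congr rfl fun k _ => ?_
        rw [Finset.sum_comm]
        refine Finset.sum_congr rfl fun l _ => ?_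
        split
        · simp
        · rfl
    _ = ∑ l, ∑ k, (if l = k then 0 else ∑ b ∈ G k, ∑ a ∈ G l, B a b) := Finset.sum_comm
    _ = offDiagSum G B := by
        unfold offDiagSum blockL1
        refine Finset.sum_congr rfl fun x _ => Finset.sum_congr rfl fun y _ => ?_
        by_cases h : x = y
        · simp [h]
        · rw [if_neg h, if_neg h, Finset.sum_comm]
          exact Finset.sum_congr rfl fun a _ => Finset.sum_congr rfl fun b' _ =>
            (abs_of_nonneg (hB0 a b')).symm ▸ rfl

lemma kcl (hG : IsPartition G) (M : Matrix (Fin n) (Fin n) ℝ)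
    (hrows : ∀ (k : Fin K), ∀ a ∈ G k, ∀ a' ∈ G k, ∀ b, M a b = M a' b)
    {c : ℝ} (hMc : ∀ a b, |M a b| ≤ c)
    (hB0 : ∀ a b, 0 ≤ B a b) (hBs : Matrix.IsSymm B) (hBrow : ∀ a, ∑ b, B a b = 1) :
    |mip M (charMatrix G - B)| ≤ 2 * c * offDiagSum G B := by
  set D := charMatrix G - B with hD
  have hDab : ∀ a b, D a b = charMatrix G a b - B a b := fun a b => by
    rw [hD, Matrix.sub_apply]
  set blk : Fin K → Fin K → ℝ := fun k l => ∑ a ∈ G k, ∑ b ∈ G l, M a b * D a b with hblk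
  have hsplit : mip M D = ∑ k, ∑ l, blk k l := by
    unfold mip
    calc ∑ a, ∑ b, M a b * D a b
        = ∑ k, ∑ a ∈ G k, ∑ b, M a b * D a b := sum_partition hG _
      _ = ∑ k, ∑ a ∈ G k, ∑ l, ∑ b ∈ G l, M a b * D a b :=
          Finset.sum_congr rfl fun k _ => Finset.sum_congr rfl fun a _ => sum_partition hG _
      _ = ∑ k, ∑ l, blk k l := Finset.sum_congr rfl fun k _ => Finset.sum_comm
  have hdecomp : mip M D = (∑ k, blk k k) + ∑ k, ∑ l, (if k = l then 0 else blk k l) := by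
    rw [hsplit]
    have h1 : ∀ k l, blk k l = (if k = l then blk k l else 0) + (if k = l then 0 else blk k l) :=
      fun k l => by split <;> ring
    calc ∑ k, ∑ l, blk k l
        = ∑ k, ∑ l, ((if k = l then blk k l else 0) + (if k = l then 0 else blk k l)) :=
          Finset.sum_congr rfl fun k _ => Finset.sum_congr rfl fun l _ => h1 k l
      _ = ∑ k, ((∑ l, if k = l then blk k l else 0) + ∑ l, if k = l then 0 else blk k l) := by
          simp [Finset.sum_add_distrib]
      _ = (∑ k, blk k k) + ∑ k, ∑ l, (if k = l then 0 else blk k l) := by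
          rw [Finset.sum_add_distrib]
          congr 1
          refine Finset.sum_congr rfl fun k _ => ?_
          rw [Finset.sum_ite_eq Finset.univ k (blk k)]
          simp
  have hcol_nonneg : ∀ (k : Fin K) (b : Fin n), 0 ≤ ∑ a ∈ Finset.univ \ G k, B a b :=
    fun k b => Finset.sum_nonneg fun a _ => hB0 a b
  have hdiag : ∀ k, |blk k k| ≤ c * ∑ b ∈ G k, ∑ a ∈ Finset.univ \ G k, B a b := by
    intro k
    obtain ⟨a0, ha0⟩ := hG.2 k
    have hbk : blk k k = ∑ b ∈ G k, M a0 b * ∑ a ∈ Finset.univ \ G k, B a b := by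
      simp only [hblk]
      rw [Finset.sum_comm]
      refine Finset.sum_congr rfl fun b hb => ?_
      calc ∑ a ∈ G k, M a b * D a b = ∑ a ∈ G k, M a0 b * D a b :=
            Finset.sum_congr rfl fun a ha => by rw [hrows k a ha a0 ha0 b]
        _ = M a0 b * ∑ a ∈ G k, D a b := by rw [Finset.mul_sum]
        _ = M a0 b * ∑ a ∈ Finset.univ \ G k, B a b := by
            rw [show (∑ a ∈ G k, D a b) = ∑ a ∈ G k, (charMatrix G a b - B a b) from
              Finset.sum_congr rfl fun a _ => hDab a b, colsumD hG hBs hBrow hb]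
    rw [hbk]
    calc |∑ b ∈ G k, M a0 b * ∑ a ∈ Finset.univ \ G k, B a b|
        ≤ ∑ b ∈ G k, |M a0 b * ∑ a ∈ Finset.univ \ G k, B a b| :=
          Finset.abs_sum_le_sum_abs _ _
      _ ≤ ∑ b ∈ G k, c * ∑ a ∈ Finset.univ \ G k, B a b := by
          refine Finset.sum_le_sum fun b _ => ?_
          rw [abs_mul, abs_of_nonneg (hcol_nonneg k b)]
          exact mul_le_mul_of_nonneg_right (hMc a0 b) (hcol_nonneg k b)
      _ = c * ∑ b ∈ G k, ∑ a ∈ Finset.univ \ G k, B a b := by rw [Finset.mul_sum]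
  have hoff : ∀ k l, k ≠ l → |blk k l| ≤ c * blockL1 G k l B := by
    intro k l hkl
    have hblkkl : blk k l = ∑ a ∈ G k, ∑ b ∈ G l, M a b * (-(B a b)) := by
      simp only [hblk]
      refine Finset.sum_congr rfl fun a ha => Finset.sum_congr rfl fun b hb => ?_
      rw [hDab, charMatrix_off hG ha hb hkl, zero_sub]
    rw [hblkkl]
    calc |∑ a ∈ G k, ∑ b ∈ G l, M a b * (-(B a b))|
        ≤ ∑ a ∈ G k, |∑ b ∈ G l, M a b * (-(B a b))| := Finset.abs_sum_le_sum_abs _ _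
      _ ≤ ∑ a ∈ G k, ∑ b ∈ G l, |M a b * (-(B a b))| :=
          Finset.sum_le_sum fun a _ => Finset.abs_sum_le_sum_abs _ _
      _ ≤ ∑ a ∈ G k, ∑ b ∈ G l, c * |B a b| := by
          refine Finset.sum_le_sum fun a _ => Finset.sum_le_sum fun b _ => ?_
          rw [abs_mul, abs_neg]
          exact mul_le_mul_of_nonneg_right (hMc a b) (abs_nonneg _)
      _ = c * blockL1 G k l B := by
          unfold blockL1
          rw [Finset.mul_sum]
          exact Finset.sum_congr rfl fun a _ => by rw [Finset.mul_sum]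
  calc |mip M D| ≤ |∑ k, blk k k| + |∑ k, ∑ l, (if k = l then 0 else blk k l)| := by
        rw [hdecomp]; exact abs_add_le _ _
    _ ≤ (∑ k, |blk k k|) + ∑ k, ∑ l, (if k = l then 0 else |blk k l|) := by
        refine add_le_add (Finset.abs_sum_le_sum_abs _ _) ?_
        calc |∑ k, ∑ l, (if k = l then 0 else blk k l)|
            ≤ ∑ k, |∑ l, (if k = l then 0 else blk k l)| := Finset.abs_sum_le_sum_abs _ _
          _ ≤ ∑ k, ∑ l, |if k = l then 0 else blk k l| :=
              Finset.sum_le_sum fun k _ => Finset.abs_sum_le_sum_abs _ _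
          _ = ∑ k, ∑ l, (if k = l then 0 else |blk k l|) := by
              refine Finset.sum_congr rfl fun k _ => Finset.sum_congr rfl fun l _ => ?_
              split <;> simp
    _ ≤ (∑ k, c * ∑ b ∈ G k, ∑ a ∈ Finset.univ \ G k, B a b)
        + ∑ k, ∑ l, (if k = l then 0 else c * blockL1 G k l B) := by
        refine add_le_add (Finset.sum_le_sum fun k _ => hdiag k) ?_
        refine Finset.sum_le_sum fun k _ => Finset.sum_le_sum fun l _ => ?_
        split
        · exact le_refl 0
        · next h => exact hoff k l h
    _ = c * offDiagSum G B + c * offDiagSum G B := by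
        congr 1
        · rw [← Finset.mul_sum, offDiag_eq hG hB0]
        · unfold offDiagSum
          rw [Finset.mul_sum]
          refine Finset.sum_congr rfl fun k _ => ?_
          rw [Finset.mul_sum]
          refine Finset.sum_congr rfl fun l _ => ?_
          split <;> simp
    _ = 2 * c * offDiagSum G B := by ring

end PartitionAux


/-- **Lemma B.3 (deterministic control).** For any symmetric `W` and any `B ∈ C`,
`|⟨W, B* − B⟩|` is controlled by `|B*W|_∞` and `|W|_op`. -/
theorem deterministic_control (n K : ℕ) (G : Fin K → Finset (Fin n))
    (hG : IsPartition G) (W : Matrix (Fin n) (Fin n) ℝ) (hW : W.IsSymm)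
    (B : Matrix (Fin n) (Fin n) ℝ) (hB : B ∈ Cset n) :
    |mip W (charMatrix G - B)| ≤
      6 * infNorm (charMatrix G * W) * offDiagSum G B +
        opNorm W * (offDiagSum G B / (minCard G : ℝ) + (B.trace - (K : ℝ))) := by
  obtain ⟨SK, hSK⟩ := Set.mem_iUnion.1 hB
  obtain ⟨hB0, hBs, hBtr, hBone, hBpsd⟩ := hSK
  have hBrow : ∀ a, ∑ b, B a b = 1 := by
    intro a
    have := congrFun hBone a
    simpa [Matrix.mulVec, dotProduct] using this
  rcases Nat.eq_zero_or_pos K with hK0 | hKpos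
  · subst hK0
    haveI hempty : IsEmpty (Fin n) := ⟨fun a => (hG.1 a).exists.choose.elim0⟩
    have h1 : mip W (charMatrix G - B) = 0 := by unfold mip; simp
    have h2 : offDiagSum G B = 0 := by unfold offDiagSum; simp
    have h3 : B.trace = 0 := by unfold Matrix.trace; simp
    rw [h1, h2, h3]
    norm_num
  · haveI : Nonempty (Fin K) := ⟨⟨0, hKpos⟩⟩
    obtain ⟨a0, ha0⟩ := hG.2 ⟨0, hKpos⟩
    haveI : Nonempty (Fin n) := ⟨a0⟩
    set P := charMatrix G with hPdef
    have hPsym : Pᵀ = P := charMatrix_transpose hG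
    have hPP : P * P = P := charMatrix_idem hG
    have hBsym : Bᵀ = B := hBs
    have hWsym : Wᵀ = W := hW
    set D := P - B with hDdef
    have hDab : ∀ a b, D a b = charMatrix G a b - B a b := fun a b => by
      rw [hDdef, Matrix.sub_apply, hPdef]
    have hDsym : Dᵀ = D := by rw [hDdef, Matrix.transpose_sub, hPsym, hBsym]
    have hQsym : (1 - P)ᵀ = 1 - P := by
      rw [Matrix.transpose_sub, Matrix.transpose_one, hPsym]
    have hQH : (1 - P)ᴴ = 1 - P := by
      rw [Matrix.conjTranspose_eq_transpose_of_trivial, hQsym]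
    set S := (1 - P) * B * (1 - P) with hSdef
    set N := P * W + P * W * (1 - P) with hNdef
    -- decomposition of the inner product
    have e0 : mip W D = mip (P * W) D + mip ((1 - P) * W * P) D
        + mip ((1 - P) * W * (1 - P)) D := by
      have hWd : W = P * W + (1 - P) * W * P + (1 - P) * W * (1 - P) := by noncomm_ring
      calc mip W D = mip (P * W + (1 - P) * W * P + (1 - P) * W * (1 - P)) D := by
            rw [← hWd]
        _ = mip (P * W) D + mip ((1 - P) * W * P) D + mip ((1 - P) * W * (1 - P)) D := by
            rw [mip_add_left, mip_add_left]
    have e1 : mip ((1 - P) * W * P) D = mip (P * W * (1 - P)) D := by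
      have ht : (P * W * (1 - P))ᵀ = (1 - P) * W * P := by
        rw [Matrix.transpose_mul, Matrix.transpose_mul, hQsym, hWsym, hPsym,
          Matrix.mul_assoc]
      rw [← ht, mip_transpose_left _ _ hDsym]
    have e2 : mip ((1 - P) * W * (1 - P)) D = - mip W S := by
      have a1 : (1 - P) * W * (1 - P) = (1 - P) * (W * (1 - P)) := Matrix.mul_assoc _ _ _
      have a4 : (1 - P) * D * (1 - P) = -S := by
        have h0 : (1 - P) * D = -((1 - P) * B) := by
          calc (1 - P) * D = (1 - P) * P - (1 - P) * B := by rw [hDdef, Matrix.mul_sub]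
            _ = -((1 - P) * B) := by
                rw [Matrix.sub_mul, Matrix.one_mul, hPP, sub_self, zero_sub]
        rw [h0, hSdef, Matrix.neg_mul]
      calc mip ((1 - P) * W * (1 - P)) D
          = mip ((1 - P) * (W * (1 - P))) D := by rw [a1]
        _ = mip (W * (1 - P)) ((1 - P)ᵀ * D) := mipL _ _ _
        _ = mip W (((1 - P)ᵀ * D) * (1 - P)ᵀ) := mipR _ _ _
        _ = mip W ((1 - P) * D * (1 - P)) := by rw [hQsym]
        _ = mip W (-S) := by rw [a4]
        _ = - mip W S := mip_neg_right _ _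
    have hsum : mip W D = mip N D - mip W S := by
      rw [e0, e1, e2, hNdef, mip_add_left]
      ring
    -- S is PSD
    have hSpsd : S.PosSemidef := by
      have h := hBpsd.mul_mul_conjTranspose_same (1 - P)
      rw [hQH] at h
      rw [hSdef]
      exact h
    -- trace identity for S
    have hPB : mip P B = (P * B).trace := by rw [mip_eq_trace, hBsym]
    have hPPm : mip P P = (K : ℝ) := mip_charMatrix_self hG
    have hexp : S = B - P * B - B * P + P * B * P := by rw [hSdef]; noncomm_ring
    have htrS : S.trace = B.trace - (P * B).trace := by
      rw [hexp, Matrix.trace_add, Matrix.trace_sub, Matrix.trace_sub]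
      have t1 : (P * B * P).trace = (P * B).trace := by
        rw [Matrix.trace_mul_cycle P B P, hPP]
      have t2 : (B * P).trace = (P * B).trace := Matrix.trace_mul_comm B P
      rw [t1, t2]
      ring
    have hmipPD : mip P D = (K : ℝ) - mip P B := by
      rw [hDdef, mip_sub_right, hPPm]
    have htrS2 : S.trace = (B.trace - (K : ℝ)) + mip P D := by
      rw [htrS, hmipPD, hPB]; ring
    -- minimal cardinality facts
    have hne : Set.Nonempty {m : ℕ | ∃ k : Fin K, m = (G k).card} :=
      ⟨(G ⟨0, hKpos⟩).card, ⟨⟨0, hKpos⟩, rfl⟩⟩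
    have hmem : minCard G ∈ {m : ℕ | ∃ k : Fin K, m = (G k).card} := Nat.sInf_mem hne
    obtain ⟨k₀, hk₀⟩ := hmem
    have hmpos : 0 < minCard G := by
      rw [hk₀]
      exact Finset.card_pos.2 (hG.2 k₀)
    have hmR : (0 : ℝ) < (minCard G : ℝ) := by exact_mod_cast hmpos
    have hmle : ∀ k : Fin K, ((G k).card : ℝ)⁻¹ ≤ ((minCard G : ℝ))⁻¹ := by
      intro k
      have h0 : minCard G ≤ (G k).card :=
        Nat.sInf_le (show (G k).card ∈ {m : ℕ | ∃ k : Fin K, m = (G k).card} from ⟨k, rfl⟩)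
      have h1 : (minCard G : ℝ) ≤ ((G k).card : ℝ) := by exact_mod_cast h0
      exact inv_anti₀ hmR h1
    -- bound on mip P D
    have hPDle : mip P D ≤ offDiagSum G B / (minCard G : ℝ) := by
      have hform : mip P D
          = ∑ k, ((G k).card : ℝ)⁻¹ * ∑ b ∈ G k, ∑ a ∈ Finset.univ \ G k, B a b := by
        unfold mip
        calc ∑ a, ∑ b, P a b * D a b
            = ∑ k, ∑ a ∈ G k, ∑ b, P a b * D a b := sum_partition hG _
          _ = ∑ k, ∑ a ∈ G k, ∑ b ∈ G k, ((G k).card : ℝ)⁻¹ * D a b := by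
              refine Finset.sum_congr rfl fun k _ => Finset.sum_congr rfl fun a ha => ?_
              calc ∑ b, P a b * D a b
                  = ∑ b, (if b ∈ G k then ((G k).card : ℝ)⁻¹ * D a b else 0) := by
                    refine Finset.sum_congr rfl fun b _ => ?_
                    rw [hPdef, charMatrix_apply hG ha b]
                    split <;> simp
                _ = ∑ b ∈ G k, ((G k).card : ℝ)⁻¹ * D a b := by
                    rw [Finset.sum_ite_mem, Finset.univ_inter]
          _ = ∑ k, ((G k).card : ℝ)⁻¹ * ∑ b ∈ G k, ∑ a ∈ Finset.univ \ G k, B a b := by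
              refine Finset.sum_congr rfl fun k _ => ?_
              calc ∑ a ∈ G k, ∑ b ∈ G k, ((G k).card : ℝ)⁻¹ * D a b
                  = ∑ b ∈ G k, ∑ a ∈ G k, ((G k).card : ℝ)⁻¹ * D a b := Finset.sum_comm
                _ = ∑ b ∈ G k, ((G k).card : ℝ)⁻¹ * ∑ a ∈ Finset.univ \ G k, B a b := by
                    refine Finset.sum_congr rfl fun b hb => ?_
                    rw [← Finset.mul_sum,
                      show (∑ a ∈ G k, D a b) = ∑ a ∈ G k, (charMatrix G a b - B a b) from
                        Finset.sum_congr rfl fun a _ => hDab a b,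
                      colsumD hG hBs hBrow hb]
                _ = ((G k).card : ℝ)⁻¹ * ∑ b ∈ G k, ∑ a ∈ Finset.univ \ G k, B a b := by
                    rw [Finset.mul_sum]
      rw [hform]
      have htk : ∀ k : Fin K, 0 ≤ ∑ b ∈ G k, ∑ a ∈ Finset.univ \ G k, B a b :=
        fun k => Finset.sum_nonneg fun b _ => Finset.sum_nonneg fun a _ => hB0 a b
      calc ∑ k, ((G k).card : ℝ)⁻¹ * ∑ b ∈ G k, ∑ a ∈ Finset.univ \ G k, B a b
          ≤ ∑ k, ((minCard G : ℝ))⁻¹ * ∑ b ∈ G k, ∑ a ∈ Finset.univ \ G k, B a b :=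
            Finset.sum_le_sum fun k _ => mul_le_mul_of_nonneg_right (hmle k) (htk k)
        _ = ((minCard G : ℝ))⁻¹ * ∑ k, ∑ b ∈ G k, ∑ a ∈ Finset.univ \ G k, B a b := by
            rw [Finset.mul_sum]
        _ = offDiagSum G B / (minCard G : ℝ) := by
            rw [offDiag_eq hG hB0, inv_mul_eq_div]
    -- entrywise bounds for N
    have hc0 : 0 ≤ infNorm (P * W) :=
      le_trans (abs_nonneg ((P * W) a0 a0)) (entry_le_infNorm (P * W) a0 a0)
    have hP0 : ∀ a b, 0 ≤ P a b := by
      intro a b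
      rw [hPdef]
      unfold charMatrix
      refine Finset.sum_nonneg fun k _ => ?_
      split
      · positivity
      · exact le_refl 0
    have hPcol : ∀ b, ∑ e, P e b = 1 := by
      intro b
      calc ∑ e, P e b = ∑ e, charMatrix G b e := by
            refine Finset.sum_congr rfl fun e _ => ?_
            rw [hPdef]
            exact charMatrix_symm_apply e b
        _ = 1 := charMatrix_rowsum hG b
    have hPWP : ∀ a b, |(P * W * P) a b| ≤ infNorm (P * W) := by
      intro a b
      rw [show (P * W * P) a b = ∑ e, (P * W) a e * P e b from Matrix.mul_apply]
      calc |∑ e, (P * W) a e * P e b| ≤ ∑ e, |(P * W) a e * P e b| :=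
            Finset.abs_sum_le_sum_abs _ _
        _ ≤ ∑ e, infNorm (P * W) * P e b := by
            refine Finset.sum_le_sum fun e _ => ?_
            rw [abs_mul, abs_of_nonneg (hP0 e b)]
            exact mul_le_mul_of_nonneg_right (entry_le_infNorm _ a e) (hP0 e b)
        _ = infNorm (P * W) := by rw [← Finset.mul_sum, hPcol b, mul_one]
    have hNb : ∀ a b, |N a b| ≤ 3 * infNorm (P * W) := by
      intro a b
      have hNab : N a b = (P * W) a b + ((P * W) a b - (P * W * P) a b) := by
        rw [hNdef]
        have hmul : P * W * (1 - P) = P * W - P * W * P := by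
          rw [Matrix.mul_sub, Matrix.mul_one]
        rw [hmul, Matrix.add_apply, Matrix.sub_apply]
      rw [hNab]
      have h1 := abs_le.1 (entry_le_infNorm (P * W) a b)
      have h2 := abs_le.1 (hPWP a b)
      rw [abs_le]
      constructor <;> [linarith [h1.1, h2.2]; linarith [h1.2, h2.1]]
    have hNrows : ∀ (k : Fin K), ∀ a ∈ G k, ∀ a' ∈ G k, ∀ b, N a b = N a' b := by
      intro k a ha a' ha' b
      have hProw : ∀ e, P a e = P a' e := fun e => by
        rw [hPdef, charMatrix_apply hG ha e, charMatrix_apply hG ha' e]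
      have hfac : N = P * (W + W * (1 - P)) := by
        rw [hNdef, Matrix.mul_add, Matrix.mul_assoc]
      rw [hfac, Matrix.mul_apply, Matrix.mul_apply]
      exact Finset.sum_congr rfl fun e _ => by rw [hProw e]
    have hkcl0 := kcl hG N hNrows hNb hB0 hBs hBrow
    have hkcl : |mip N D| ≤ 2 * (3 * infNorm (P * W)) * offDiagSum G B := by
      rw [hDdef, hPdef]
      exact hkcl0
    -- combine
    have hWS : |mip W S| ≤ opNorm W * S.trace := abs_mip_le_opNorm_trace W S hSpsd
    have hop0 : 0 ≤ opNorm W := opNorm_nonneg W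
    calc |mip W D| ≤ |mip N D| + |mip W S| := by
          rw [hsum]; exact abs_sub _ _
      _ ≤ 2 * (3 * infNorm (P * W)) * offDiagSum G B + opNorm W * S.trace :=
          add_le_add hkcl hWS
      _ ≤ 6 * infNorm (P * W) * offDiagSum G B
          + opNorm W * (offDiagSum G B / (minCard G : ℝ) + (B.trace - (K : ℝ))) := by
          have hTr : S.trace ≤ offDiagSum G B / (minCard G : ℝ) + (B.trace - (K : ℝ)) := by
            rw [htrS2]; linarith [hPDle]
          have h2 := mul_le_mul_of_nonneg_left hTr hop0
          have he : 2 * (3 * infNorm (P * W)) * offDiagSum G B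
              = 6 * infNorm (P * W) * offDiagSum G B := by ring
          linarith [h2, he.le, he.ge]

end Clustering
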